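/- For every n >= 7, the generalized Petersen graph GP(n,3) admits no perfect 2-coloring with parameter matrix [[2,1],[2,1]]. -/
import Mathlib


/-- The generalized Petersen graph `GP n k`. Vertices are pairs `(s, i)` with
`s : Bool` (`false` = outer vertex `aᵢ`, `true` = inner vertex `bᵢ`) and `i : ZMod n`.
Edges: `aᵢ aᵢ₊₁`, `aᵢ bᵢ`, `bᵢ bᵢ₊ₖ`. -/
def GP (n k : ℕ) : SimpleGraph (Bool × ZMod n) :=
  SimpleGraph.fromRel (fun v w =>
    (v.1 = false ∧ w.1 = false ∧ w.2 = v.2 + 1) ∨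
    (v.1 = false ∧ w.1 = true ∧ w.2 = v.2) ∨
    (v.1 = true ∧ w.1 = true ∧ w.2 = v.2 + (k : ZMod n)))

/-- `T` is a perfect 2-coloring of `G` with parameter matrix `A`:
`T` is surjective onto the two colors (color `0` = white = "1", color `1` = black = "2"),
and every vertex of color `i` has exactly `A i j` neighbors of color `j`. -/
def IsPerfectColoring {V : Type*} (G : SimpleGraph V) (T : V → Fin 2)
    (A : Matrix (Fin 2) (Fin 2) ℕ) : Prop :=
  Function.Surjective T ∧
  ∀ v : V, ∀ j : Fin 2, {w | G.Adj v w ∧ T w = j}.ncard = A (T v) j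

open Finset in
lemma card_filter_triple' {α : Type*} [DecidableEq α] (p : α → Prop) [DecidablePred p]
    (a b c : α) (hab : a ≠ b) (hac : a ≠ c) (hbc : b ≠ c) :
    (({a, b, c} : Finset α).filter p).card =
      (if p a then 1 else 0) + (if p b then 1 else 0) + (if p c then 1 else 0) := by
  rw [Finset.card_filter, Finset.sum_insert (by simp [hab, hac]),
    Finset.sum_insert (by simp [hbc]), Finset.sum_singleton, add_assoc]

lemma ncard_triple {α : Type*} [DecidableEq α] (p : α → Prop) [DecidablePred p]
    (a b c : α) (S : Set α) (hS : S = {x | (x = a ∨ x = b ∨ x = c) ∧ p x})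
    (hab : a ≠ b) (hac : a ≠ c) (hbc : b ≠ c) :
    S.ncard = (if p a then 1 else 0) + (if p b then 1 else 0) + (if p c then 1 else 0) := by
  rw [← card_filter_triple' p a b c hab hac hbc, ← Set.ncard_coe_finset]
  congr 1
  rw [hS]
  ext x
  simp [Finset.mem_filter, Finset.mem_insert]

theorem stmt_3 (n : ℕ) (hn : 7 ≤ n) (T : Bool × ZMod n → Fin 2) :
    ¬ IsPerfectColoring (GP n 3) T !![2, 1; 2, 1] := by
  rintro ⟨-, hT⟩
  haveI : NeZero n := ⟨by omega⟩
  have hd : ∀ m : ℕ, 0 < m → m < 7 → ((m : ZMod n) ≠ 0) := by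
    intro m hm1 hm2 h
    rw [ZMod.natCast_eq_zero_iff] at h
    exact absurd (Nat.le_of_dvd hm1 h) (by omega)
  have h1 : (1 : ZMod n) ≠ 0 := by have := hd 1 (by norm_num) (by norm_num); simpa using this
  have h2 : (2 : ZMod n) ≠ 0 := by have := hd 2 (by norm_num) (by norm_num); simpa using this
  have h3 : (3 : ZMod n) ≠ 0 := by have := hd 3 (by norm_num) (by norm_num); simpa using this
  have h6 : (6 : ZMod n) ≠ 0 := by have := hd 6 (by norm_num) (by norm_num); simpa using this
  -- adjacency characterizations
  have hadjF : ∀ (i : ZMod n) (w : Bool × ZMod n), (GP n 3).Adj (false, i) w ↔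
      w = (false, i - 1) ∨ w = (false, i + 1) ∨ w = (true, i) := by
    intro i w
    obtain ⟨s, j⟩ := w
    simp only [GP, SimpleGraph.fromRel_adj, Prod.mk.injEq, ne_eq]
    cases s <;> simp
    constructor
    · rintro ⟨hne, h | h⟩
      · right; rw [h]
      · left; rw [h]; ring
    · rintro (h | h)
      · subst h; exact ⟨fun h => h1 (by linear_combination h), Or.inr (by ring)⟩
      · subst h; exact ⟨fun h => h1 (by linear_combination -h), Or.inl rfl⟩
  have hadjT : ∀ (i : ZMod n) (w : Bool × ZMod n), (GP n 3).Adj (true, i) w ↔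
      w = (true, i - 3) ∨ w = (true, i + 3) ∨ w = (false, i) := by
    intro i w
    obtain ⟨s, j⟩ := w
    simp only [GP, SimpleGraph.fromRel_adj, Prod.mk.injEq, ne_eq, Nat.cast_ofNat]
    cases s <;> simp
    · constructor
      · rintro h; exact h.symm
      · rintro h; exact h.symm
    · constructor
      · rintro ⟨hne, h | h⟩
        · right; rw [h]
        · left; rw [h]; ring
      · rintro (h | h)
        · subst h; exact ⟨fun h => h3 (by linear_combination h), Or.inr (by ring)⟩
        · subst h; exact ⟨fun h => h3 (by linear_combination -h), Or.inl rfl⟩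
  classical
  set X : ZMod n → ℕ := fun i => if T (false, i) = 1 then 1 else 0 with hX
  set Y : ZMod n → ℕ := fun i => if T (true, i) = 1 then 1 else 0 with hY
  have hA : ∀ t : Fin 2, !![2, 1; 2, 1] t 1 = 1 := by decide
  have E1 : ∀ i : ZMod n, X (i - 1) + X (i + 1) + Y i = 1 := by
    intro i
    have key := hT (false, i) 1
    rw [hA] at key
    rw [ncard_triple (fun w => T w = 1) (false, i - 1) (false, i + 1) (true, i)
      _ (by ext w; simp [hadjF i w])
      (by simp [Prod.ext_iff]; intro h; exact h2 (by linear_combination -h))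
      (by simp) (by simp)] at key
    exact key
  have E2 : ∀ i : ZMod n, Y (i - 3) + Y (i + 3) + X i = 1 := by
    intro i
    have key := hT (true, i) 1
    rw [hA] at key
    rw [ncard_triple (fun w => T w = 1) (true, i - 3) (true, i + 3) (false, i)
      _ (by ext w; simp [hadjT i w])
      (by simp [Prod.ext_iff]; intro h; exact h6 (by linear_combination -h))
      (by simp) (by simp)] at key
    exact key
  -- basic bounds
  have hXle : ∀ i, X i ≤ 1 := by intro i; simp only [hX]; split <;> omega
  -- key equation E3
  have E3 : ∀ i : ZMod n, X (i - 4) + X (i - 2) + X (i + 2) + X (i + 4) = 1 + X i := by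
    intro i
    have e1 := E1 (i - 3)
    have e2 := E1 (i + 3)
    have e3 := E2 i
    have r1 : i - 3 - 1 = i - 4 := by ring
    have r2 : i - 3 + 1 = i - 2 := by ring
    have r3 : i + 3 - 1 = i + 2 := by ring
    have r4 : i + 3 + 1 = i + 4 := by ring
    rw [r1, r2] at e1
    rw [r3, r4] at e2
    omega
  -- distance-2 constraint
  have D2 : ∀ i : ZMod n, X i + X (i + 2) ≤ 1 := by
    intro i
    have := E1 (i + 1)
    have r1 : i + 1 - 1 = i := by ring
    have r2 : i + 1 + 1 = i + 2 := by ring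
    rw [r1, r2] at this
    omega
  by_cases hall : ∀ i : ZMod n, X i = 0
  · -- then Y ≡ 1, contradiction with E2
    have hY1 : ∀ i, Y i = 1 := by
      intro i
      have := E1 i
      rw [hall (i - 1), hall (i + 1)] at this
      omega
    have := E2 0
    rw [hY1, hY1, hall] at this
    omega
  · push_neg at hall
    obtain ⟨i, hi⟩ := hall
    have hXi : X i = 1 := by have := hXle i; omega
    have hXi2 : X (i + 2) = 0 := by have := D2 i; omega
    have hXi2' : X (i - 2) = 0 := by
      have := D2 (i - 2)
      have r : i - 2 + 2 = i := by ring
      rw [r] at this; omega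
    have hXi4 : X (i + 4) = 1 := by
      have := E3 i
      have := hXle (i - 4)
      have := hXle (i + 4)
      omega
    -- contradiction via E3 at i + 2
    have e := E3 (i + 2)
    have r1 : i + 2 - 2 = i := by ring
    have r2 : i + 2 + 2 = i + 4 := by ring
    rw [r1, r2] at e
    have := hXle (i + 2)
    omega
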